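/- For any positive reals a, s and any real A, the tail integral ∫ₓ^∞ t^A exp(-a t^s) dt is asymptotically equal to (1/(a s)) x^{A+1-s} exp(-a x^s) as x → ∞. -/

import Mathlib

open MeasureTheory Filter Real Set

lemma aux_rpow_mul_exp_tendsto (a s : ℝ) (ha : 0 < a) (hs : 0 < s) (B : ℝ) :
    Tendsto (fun x : ℝ => x ^ B * Real.exp (-(a * x ^ s))) atTop (nhds 0) := by
  have h := (tendsto_rpow_mul_exp_neg_mul_atTop_nhds_zero (B / s) a ha).comp
    (tendsto_rpow_atTop hs)
  refine h.congr' ?_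
  filter_upwards [eventually_gt_atTop (0 : ℝ)] with x hx
  simp only [Function.comp]
  rw [← Real.rpow_mul hx.le, mul_div_cancel₀ _ hs.ne', neg_mul]

theorem tail_integral_exp_neg_rpow_asymptotic (a s A : ℝ) (ha : 0 < a) (hs : 0 < s) :
    Tendsto (fun x : ℝ =>
        (∫ t in Set.Ioi x, t ^ A * Real.exp (-(a * t ^ s))) /
          ((1 / (a * s)) * x ^ (A + 1 - s) * Real.exp (-(a * x ^ s))))
      atTop (nhds 1) := by
  have has : (0:ℝ) < a * s := mul_pos ha hs
  set f : ℝ → ℝ := fun t => t ^ A * Real.exp (-(a * t ^ s)) with hfdef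
  set g : ℝ → ℝ := fun x => 1 / (a * s) * x ^ (A + 1 - s) * Real.exp (-(a * x ^ s)) with hgdef
  set g' : ℝ → ℝ := fun x =>
    1 / (a * s) * Real.exp (-(a * x ^ s)) * ((A + 1 - s) * x ^ (A - s) - a * s * x ^ A)
    with hg'def
  -- continuity of f on positive reals
  have hcontAt : ∀ x : ℝ, 0 < x → ContinuousAt f x := by
    intro x hx
    exact (Real.continuousAt_rpow_const x A (Or.inl hx.ne')).mul
      (Real.continuous_exp.continuousAt.comp
        (((Real.continuousAt_rpow_const x s (Or.inl hx.ne')).const_mul a).neg))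
  have hcont : ContinuousOn f (Set.Ici 1) := fun x hx =>
    (hcontAt x (lt_of_lt_of_le one_pos hx)).continuousWithinAt
  -- f is O(x^(-2)) at infinity
  have hO : f =O[atTop] fun x : ℝ => x ^ (-2 : ℝ) := by
    refine Asymptotics.IsLittleO.isBigO (Asymptotics.isLittleO_of_tendsto' ?_ ?_)
    · filter_upwards [eventually_gt_atTop (0:ℝ)] with x hx h
      exact absurd h (by positivity)
    · have := aux_rpow_mul_exp_tendsto a s ha hs (A + 2)
      refine this.congr' ?_
      filter_upwards [eventually_gt_atTop (0:ℝ)] with x hx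
      have hh : x ^ (A + 2) = x ^ A / x ^ (-2 : ℝ) := by
        rw [← Real.rpow_sub hx]; norm_num
      rw [hfdef]
      simp only
      rw [hh]
      ring
  have hInt : IntegrableOn f (Set.Ioi 1) := by
    have := (hcont.locallyIntegrableOn measurableSet_Ici).integrableOn_of_isBigO_atTop hO
      ⟨Set.Ioi 1, Ioi_mem_atTop 1, integrableOn_Ioi_rpow_of_lt (by norm_num) one_pos⟩
    exact Iff.mp integrableOn_Ici_iff_integrableOn_Ioi this
  set F : ℝ → ℝ := fun x => ∫ t in Set.Ioi x, f t with hFdef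
  have hFeq : ∀ x : ℝ, 1 ≤ x → F x = F 1 - ∫ t in (1:ℝ)..x, f t := by
    intro x hx
    have hsplit : Set.Ioc 1 x ∪ Set.Ioi x = Set.Ioi (1:ℝ) := Set.Ioc_union_Ioi_eq_Ioi hx
    have hdisj : Disjoint (Set.Ioc 1 x) (Set.Ioi x) := Set.Ioc_disjoint_Ioi le_rfl
    have hu := MeasureTheory.setIntegral_union hdisj measurableSet_Ioi
      (hInt.mono_set Set.Ioc_subset_Ioi_self) (hInt.mono_set (Set.Ioi_subset_Ioi hx))
    rw [hsplit] at hu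
    rw [intervalIntegral.integral_of_le hx, hFdef]
    simp only
    rw [hu]
    ring
  have hF0 : Tendsto F atTop (nhds 0) := by
    have h1 := intervalIntegral_tendsto_integral_Ioi 1 hInt (tendsto_id (α := ℝ))
    have h2 : Tendsto (fun x : ℝ => F 1 - ∫ t in (1:ℝ)..x, f t) atTop (nhds (F 1 - F 1)) :=
      tendsto_const_nhds.sub h1
    rw [sub_self] at h2
    refine h2.congr' ?_
    filter_upwards [eventually_ge_atTop (1:ℝ)] with x hx
    exact (hFeq x hx).symm
  have hFderiv : ∀ᶠ x in atTop, HasDerivAt F (-(f x)) x := by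
    filter_upwards [eventually_gt_atTop (1:ℝ)] with x hx
    have hx0 : (0:ℝ) < x := lt_trans one_pos hx
    have hii : IntervalIntegrable f volume 1 x := by
      rw [intervalIntegrable_iff_integrableOn_Ioc_of_le hx.le]
      exact hInt.mono_set Set.Ioc_subset_Ioi_self
    have hmeas : StronglyMeasurableAtFilter f (nhds x) :=
      ContinuousAt.stronglyMeasurableAtFilter isOpen_Ioi
        (fun y hy => hcontAt y hy) x hx0
    have hD := intervalIntegral.integral_hasDerivAt_right hii hmeas (hcontAt x hx0)
    have heq : F =ᶠ[nhds x] fun u => F 1 - ∫ t in (1:ℝ)..u, f t := by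
      filter_upwards [Ioi_mem_nhds hx] with u hu
      exact hFeq u hu.le
    have := ((hasDerivAt_const x (F 1)).sub hD).congr_of_eventuallyEq heq
    simpa using this
  have hgderiv : ∀ᶠ x in atTop, HasDerivAt g (g' x) x := by
    filter_upwards [eventually_gt_atTop (0:ℝ)] with x hx0
    have h1 : HasDerivAt (fun y : ℝ => y ^ (A + 1 - s)) ((A + 1 - s) * x ^ (A + 1 - s - 1)) x :=
      Real.hasDerivAt_rpow_const (Or.inl hx0.ne')
    have h2 : HasDerivAt (fun y : ℝ => Real.exp (-(a * y ^ s)))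
        (Real.exp (-(a * x ^ s)) * -(a * (s * x ^ (s - 1)))) x :=
      (((Real.hasDerivAt_rpow_const (p := s) (Or.inl hx0.ne')).const_mul a).neg).exp
    have h := (h1.const_mul (1 / (a * s))).mul h2
    have hxA : x ^ (A + 1 - s) * x ^ (s - 1) = x ^ A := by
      rw [← Real.rpow_add hx0]; norm_num
    convert h using 1
    · rfl
    · rfl
    · rfl
    rw [hg'def]
    simp only
    rw [show A + 1 - s - 1 = A - s by ring, ← hxA]
    ring
  have hg0 : Tendsto g atTop (nhds 0) := by
    have := (aux_rpow_mul_exp_tendsto a s ha hs (A + 1 - s)).const_mul (1 / (a * s))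
    rw [mul_zero] at this
    refine this.congr ?_
    intro x; rw [hgdef]; simp only; ring
  have hfac : Tendsto (fun x : ℝ => (A + 1 - s) * x ^ (-s) - a * s) atTop
      (nhds (-(a * s))) := by
    have := ((tendsto_rpow_neg_atTop hs).const_mul (A + 1 - s)).sub
      (tendsto_const_nhds (x := a * s))
    simpa using this
  have hfacneg : ∀ᶠ x in atTop, (A + 1 - s) * x ^ (-s) - a * s < 0 :=
    hfac.eventually_lt_const (by linarith)
  have hkey : ∀ x : ℝ, 0 < x →
      (A + 1 - s) * x ^ (A - s) - a * s * x ^ A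
        = x ^ A * ((A + 1 - s) * x ^ (-s) - a * s) := by
    intro x hx0
    rw [show A - s = A + -s by ring, Real.rpow_add hx0]
    ring
  have hg'ne : ∀ᶠ x in atTop, g' x ≠ 0 := by
    filter_upwards [eventually_gt_atTop (0:ℝ), hfacneg] with x hx0 hneg
    rw [hg'def]
    simp only
    rw [hkey x hx0]
    have h2 : (0:ℝ) < Real.exp (-(a * x ^ s)) := Real.exp_pos _
    have h3 : (0:ℝ) < x ^ A := Real.rpow_pos_of_pos hx0 A
    exact mul_ne_zero (mul_ne_zero (by positivity) h2.ne') (mul_ne_zero h3.ne' hneg.ne)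
  have hdiv : Tendsto (fun x => -(f x) / g' x) atTop (nhds 1) := by
    have hlim : Tendsto (fun x : ℝ => a * s / (a * s - (A + 1 - s) * x ^ (-s))) atTop
        (nhds 1) := by
      have hden : Tendsto (fun x : ℝ => a * s - (A + 1 - s) * x ^ (-s)) atTop
          (nhds (a * s)) := by
        have := (tendsto_const_nhds (x := a * s) (f := atTop (α := ℝ))).sub
          ((tendsto_rpow_neg_atTop hs).const_mul (A + 1 - s))
        simpa using this
      have := (tendsto_const_nhds (x := a * s) (f := atTop (α := ℝ))).div hden has.ne'
      simpa [div_self has.ne', Pi.div_def] using this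
    refine hlim.congr' ?_
    filter_upwards [eventually_gt_atTop (0:ℝ), hfacneg] with x hx0 hneg
    have h2 : (0:ℝ) < Real.exp (-(a * x ^ s)) := Real.exp_pos _
    have h3 : (0:ℝ) < x ^ A := Real.rpow_pos_of_pos hx0 A
    have hd1 : a * s - (A + 1 - s) * x ^ (-s) ≠ 0 := by linarith
    have hgx : (1 / (a * s) * Real.exp (-(a * x ^ s)) *
        (x ^ A * ((A + 1 - s) * x ^ (-s) - a * s))) ≠ 0 :=
      mul_ne_zero (mul_ne_zero (by positivity) h2.ne') (mul_ne_zero h3.ne' hneg.ne)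
    rw [hfdef, hg'def]
    simp only
    rw [hkey x hx0, div_eq_div_iff hd1 hgx]
    field_simp
    ring
  exact HasDerivAt.lhopital_zero_atTop hFderiv hgderiv hg'ne hF0 hg0 hdiv
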